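/- Let n ≥ 2 be an integer and let f : ℝ^{1+n} → ℂ be continuous and compactly supported. Then for every (t,x) ∈ ℝ × ℝ^n, ∫_{S^{n-1}} Lf(x − tθ, θ) dθ = ∫_{ℝ^n} ( f(t + ‖y‖, x + y) + f(t − ‖y‖, x + y) ) · ‖y‖^{1−n} dy, where dθ is the standard surface measure on S^{n-1}. (The left-hand side is the normal operator N f(t,x) = L*Lf(t,x); the right-hand side exhibits its Schwartz kernel (δ(t−t'−|x−x'|)+δ(t−t'+|x−x'|))/|x−x'|^{n−1}.) -/

import Mathlib

open MeasureTheory Metric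
open scoped Real

/-- The light ray transform on Minkowski space `ℝ^{1+n}`. -/
noncomputable def lightRay {n : ℕ} (f : ℝ × EuclideanSpace ℝ (Fin n) → ℂ)
    (y : EuclideanSpace ℝ (Fin n)) (θ : sphere (0 : EuclideanSpace ℝ (Fin n)) 1) : ℂ :=
  ∫ s : ℝ, f (s, y + s • (θ : EuclideanSpace ℝ (Fin n)))

/-- The standard surface measure on the unit sphere of `ℝ^n`. -/
noncomputable def sphereMeasure (n : ℕ) :
    Measure (sphere (0 : EuclideanSpace ℝ (Fin n)) 1) :=
  (volume : Measure (EuclideanSpace ℝ (Fin n))).toSphere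

namespace NormalOpAux

open Set

variable {n : ℕ}

local notation "E" => EuclideanSpace ℝ (Fin n)

lemma exists_time_bound (f : ℝ × E → ℂ) (hsupp : HasCompactSupport f) :
    ∃ R : ℝ, 0 ≤ R ∧ ∀ p : ℝ × E, R < |p.1| → f p = 0 := by
  obtain ⟨R, hR⟩ := hsupp.isBounded.subset_closedBall 0
  refine ⟨max R 0, le_max_right _ _, fun p hp ↦ ?_⟩
  apply image_eq_zero_of_notMem_tsupport
  intro hmem
  have h1 : ‖p.1‖ ≤ ‖p‖ := norm_fst_le p
  have h2 : ‖p‖ ≤ R := by simpa [dist_zero_right] using hR hmem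
  rw [Real.norm_eq_abs] at h1
  have := le_max_left R 0
  linarith [hp]

lemma nontrivialE (hn : 2 ≤ n) : Nontrivial E := by
  have : Nonempty (Fin n) := ⟨⟨0, by omega⟩⟩
  infer_instance

lemma integrable_polar_iff (hn : 2 ≤ n) (g : E → ℂ) :
    Integrable (fun p : sphere (0 : E) 1 × Ioi (0 : ℝ) ↦ g ((p.2 : ℝ) • (p.1 : E)))
      (Measure.prod (volume : Measure E).toSphere (Measure.volumeIoiPow (n - 1)))
      ↔ Integrable g (volume : Measure E) := by
  haveI : Nontrivial E := nontrivialE hn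
  have hdim : n - 1 = Module.finrank ℝ E - 1 := by
    rw [finrank_euclideanSpace_fin]
  rw [hdim,
    ← (volume : Measure E).measurePreserving_homeomorphUnitSphereProd.map_eq,
    (Homeomorph.measurableEmbedding _).integrable_map_iff]
  have hcomp : ((fun p : sphere (0 : E) 1 × Ioi (0 : ℝ) ↦ g ((p.2 : ℝ) • (p.1 : E))) ∘
      (homeomorphUnitSphereProd E)) = fun y : ({0}ᶜ : Set E) ↦ g y := by
    funext y
    simp only [Function.comp_apply, homeomorphUnitSphereProd_apply_snd_coe,
      homeomorphUnitSphereProd_apply_fst_coe]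
    rw [smul_inv_smul₀ (norm_ne_zero_iff.2 y.2)]
  rw [hcomp,
    show (fun y : ({0}ᶜ : Set E) ↦ g ↑y) = (g ∘ Subtype.val) from rfl,
    ← (MeasurableEmbedding.subtype_coe (measurableSet_singleton (0 : E)).compl).integrable_map_iff,
    map_comap_subtype_coe (measurableSet_singleton (0 : E)).compl,
    restrict_compl_singleton]

lemma integral_polar (hn : 2 ≤ n) (g : E → ℂ)
    (hprod : Integrable (fun p : sphere (0 : E) 1 × Ioi (0 : ℝ) ↦ g ((p.2 : ℝ) • (p.1 : E)))
      (Measure.prod (volume : Measure E).toSphere (Measure.volumeIoiPow (n - 1)))) :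
    ∫ y, g y = ∫ θ : sphere (0 : E) 1,
      (∫ r in Ioi (0 : ℝ), (r ^ (n - 1) : ℝ) • g (r • (θ : E)))
        ∂((volume : Measure E).toSphere) := by
  haveI : Nontrivial E := nontrivialE hn
  have hdim : Module.finrank ℝ E - 1 = n - 1 := by rw [finrank_euclideanSpace_fin]
  have hmp := (volume : Measure E).measurePreserving_homeomorphUnitSphereProd
  rw [hdim] at hmp
  have step1 : ∫ y, g y ∂(volume : Measure E)
      = ∫ y : ({0}ᶜ : Set E), g y ∂((volume : Measure E).comap Subtype.val) := by
    rw [integral_subtype_comap (measurableSet_singleton (0 : E)).compl,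
      restrict_compl_singleton]
  have step2 : ∫ y : ({0}ᶜ : Set E), g y ∂((volume : Measure E).comap Subtype.val)
      = ∫ p : sphere (0 : E) 1 × Ioi (0 : ℝ), g ((p.2 : ℝ) • (p.1 : E))
          ∂(Measure.prod (volume : Measure E).toSphere (Measure.volumeIoiPow (n - 1))) := by
    rw [← hmp.integral_comp (Homeomorph.measurableEmbedding _)
      (fun p : sphere (0 : E) 1 × Ioi (0 : ℝ) ↦ g ((p.2 : ℝ) • (p.1 : E)))]
    refine integral_congr_ae (Filter.Eventually.of_forall fun y ↦ ?_)
    simp only [homeomorphUnitSphereProd_apply_snd_coe, homeomorphUnitSphereProd_apply_fst_coe]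
    rw [smul_inv_smul₀ (norm_ne_zero_iff.2 y.2)]
  have step3 : ∫ p : sphere (0 : E) 1 × Ioi (0 : ℝ), g ((p.2 : ℝ) • (p.1 : E))
          ∂(Measure.prod (volume : Measure E).toSphere (Measure.volumeIoiPow (n - 1)))
      = ∫ θ : sphere (0 : E) 1, (∫ r : Ioi (0 : ℝ), g ((r : ℝ) • (θ : E))
          ∂(Measure.volumeIoiPow (n - 1))) ∂((volume : Measure E).toSphere) :=
    integral_prod _ hprod
  have step4 : ∀ θ : sphere (0 : E) 1,
      (∫ r : Ioi (0 : ℝ), g ((r : ℝ) • (θ : E)) ∂(Measure.volumeIoiPow (n - 1)))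
      = ∫ r in Ioi (0 : ℝ), (r ^ (n - 1) : ℝ) • g (r • (θ : E)) := by
    intro θ
    rw [Measure.volumeIoiPow]
    have hmeas : Measurable fun r : Ioi (0 : ℝ) ↦ ((r : ℝ) ^ (n - 1)).toNNReal :=
      (measurable_subtype_coe.pow_const _).real_toNNReal
    simp only [ENNReal.ofReal]
    rw [integral_withDensity_eq_integral_smul hmeas,
      integral_subtype_comap measurableSet_Ioi
        (fun r : ℝ ↦ (r ^ (n - 1)).toNNReal • g (r • (θ : E)))]
    refine setIntegral_congr_fun measurableSet_Ioi fun r hr ↦ ?_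
    rw [NNReal.smul_def, Real.coe_toNNReal _ (pow_nonneg (le_of_lt hr) _)]
  rw [step1, step2, step3]
  exact integral_congr_ae (Filter.Eventually.of_forall fun θ ↦ step4 θ)

lemma integrable_bound (m : ℕ) (M C : ℝ) :
    Integrable (fun r : Ioi (0 : ℝ) ↦
        (Ioc (0 : ℝ) C).indicator (fun s ↦ M * s ^ (-(m : ℝ))) (r : ℝ))
      (Measure.volumeIoiPow m) := by
  rw [Measure.volumeIoiPow,
    integrable_withDensity_iff_integrable_smul'
      (by measurability)
      (Filter.Eventually.of_forall fun r ↦ ENNReal.ofReal_lt_top)]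
  have heq : (fun r : Ioi (0 : ℝ) ↦ (ENNReal.ofReal ((r : ℝ) ^ m)).toReal •
        (Ioc (0 : ℝ) C).indicator (fun s ↦ M * s ^ (-(m : ℝ))) (r : ℝ))
      = fun r : Ioi (0 : ℝ) ↦ (Ioc (0 : ℝ) C).indicator (fun _ ↦ M) (r : ℝ) := by
    funext r
    have hr : (0 : ℝ) < (r : ℝ) := r.2
    by_cases h : (r : ℝ) ∈ Ioc (0 : ℝ) C
    · rw [indicator_of_mem h, indicator_of_mem h,
        ENNReal.toReal_ofReal (pow_nonneg hr.le m), smul_eq_mul,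
        ← Real.rpow_natCast (r : ℝ) m, mul_left_comm, ← Real.rpow_add hr]
      simp
    · rw [indicator_of_notMem h, indicator_of_notMem h, smul_zero]
  rw [heq,
    show (fun r : Ioi (0 : ℝ) ↦ (Ioc (0 : ℝ) C).indicator (fun _ ↦ M) (r : ℝ))
      = ((Ioc (0 : ℝ) C).indicator (fun _ ↦ M)) ∘ Subtype.val from rfl,
    ← (MeasurableEmbedding.subtype_coe measurableSet_Ioi).integrable_map_iff,
    map_comap_subtype_coe measurableSet_Ioi,
    integrable_indicator_iff measurableSet_Ioc]
  refine (integrableOn_const_iff (C := M)).2 (Or.inr ?_)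
  rw [Measure.restrict_apply measurableSet_Ioc]
  exact lt_of_le_of_lt (measure_mono inter_subset_left) measure_Ioc_lt_top

lemma aux_integrable (hn : 2 ≤ n) (f : ℝ × E → ℂ) (hf : Continuous f)
    (hsupp : HasCompactSupport f) (t : ℝ) (x : E) (a b : ℝ) (ha : a = 1 ∨ a = -1) :
    Integrable (fun y : E ↦ (‖y‖ ^ ((1 : ℝ) - n) : ℝ) • f (t + a * ‖y‖, x + b • y))
      (volume : Measure E) := by
  rw [← integrable_polar_iff hn]
  obtain ⟨R, hR0, hR⟩ := exists_time_bound f hsupp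
  obtain ⟨M, hM⟩ := hf.bounded_above_of_compact_support hsupp
  set C : ℝ := R + |t| + 1 with hC
  have hexp : ((1 : ℝ) - n) = -((n - 1 : ℕ) : ℝ) := by
    push_cast [Nat.cast_sub (by omega : 1 ≤ n)]
    ring
  refine Integrable.mono'
    (g := fun p : sphere (0 : E) 1 × Ioi (0 : ℝ) ↦
      (Ioc (0 : ℝ) C).indicator (fun s ↦ M * s ^ (-((n - 1 : ℕ) : ℝ))) (p.2 : ℝ))
    ?_ ?_ ?_
  · have hb := integrable_bound (n - 1) M C
    have h2 := hb.smul_measure (c := (volume : Measure E).toSphere univ) (measure_ne_top _ _)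
    rw [← Measure.map_snd_prod] at h2
    exact (integrable_map_measure h2.aestronglyMeasurable measurable_snd.aemeasurable).1 h2
  · have hmeas : Measurable fun y : E ↦
        (‖y‖ ^ ((1 : ℝ) - n) : ℝ) • f (t + a * ‖y‖, x + b • y) := by
      apply Measurable.fun_smul
      · measurability
      · exact hf.measurable.comp (by fun_prop)
    exact (hmeas.comp
      (by fun_prop : Measurable fun p : sphere (0 : E) 1 × Ioi (0 : ℝ) ↦
        (p.2 : ℝ) • (p.1 : E))).aestronglyMeasurable
  · refine Filter.Eventually.of_forall fun p ↦ ?_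
    obtain ⟨⟨θ, hθ⟩, ⟨r, hr⟩⟩ := p
    have hθ1 : ‖θ‖ = 1 := mem_sphere_zero_iff_norm.1 hθ
    have hr0 : (0 : ℝ) < r := hr
    have hnorm : ‖r • θ‖ = r := by
      rw [norm_smul, hθ1, mul_one, Real.norm_eq_abs, abs_of_pos hr0]
    simp only
    rw [hnorm]
    by_cases hrC : r ≤ C
    · rw [indicator_of_mem (Set.mem_Ioc.2 ⟨hr0, hrC⟩), norm_smul, Real.norm_eq_abs,
        abs_of_nonneg (Real.rpow_nonneg hr0.le _), hexp, mul_comm M]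
      exact mul_le_mul_of_nonneg_left (hM _) (Real.rpow_nonneg hr0.le _)
    · push_neg at hrC
      rw [indicator_of_notMem (fun h ↦ absurd h.2 hrC.not_ge)]
      have habs : |a * r| = r := by
        rcases ha with rfl | rfl <;> simp [abs_of_pos hr0]
      have hargs : R < |t + a * r| := by
        have h2 : |a * r| ≤ |t + a * r| + |t| := by
          simpa using abs_add_le (t + a * r) (-t)
        rw [habs] at h2
        have hrr : C < r := hrC
        rw [hC] at hrr
        linarith
      rw [hR _ hargs, smul_zero, norm_zero]

lemma lightRay_eval (f : ℝ × E → ℂ) (hf : Continuous f) (hsupp : HasCompactSupport f)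
    (t : ℝ) (x : E) (θ : sphere (0 : E) 1) :
    lightRay f (x - t • (θ : E)) θ
      = ∫ r in Ioi (0 : ℝ), (f (t + r, x + r • (θ : E)) + f (t - r, x - r • (θ : E))) := by
  obtain ⟨R, hR0, hR⟩ := exists_time_bound f hsupp
  set F : ℝ → ℂ := fun u ↦ f (t + u, x + u • (θ : E)) with hFdef
  have hFc : Continuous F := hf.comp (by fun_prop)
  have hFs : HasCompactSupport F := by
    apply HasCompactSupport.intro (isCompact_Icc (a := -(R + |t|)) (b := R + |t|))
    intro u hu
    apply hR
    simp only [Set.mem_Icc, not_and_or, not_le] at hu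
    have h1 : R + |t| < |u| := by
      rcases hu with h | h
      · have hu0 : u < 0 := by nlinarith [abs_nonneg t]
        rw [abs_of_neg hu0]; linarith
      · rw [abs_of_pos (by nlinarith [abs_nonneg t] : (0:ℝ) < u)]; linarith
    have h2 : |u| ≤ |t + u| + |t| := by
      simpa using abs_add_le (t + u) (-t)
    show R < |t + u|
    linarith
  have hFi : Integrable F := hFc.integrable_of_hasCompactSupport hFs
  have step1 : lightRay f (x - t • (θ : E)) θ = ∫ u, F u := by
    rw [lightRay]
    rw [← integral_add_left_eq_self (μ := volume)
      (fun s : ℝ ↦ f (s, x - t • (θ : E) + s • (θ : E))) t]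
    refine integral_congr_ae (Filter.Eventually.of_forall fun u ↦ ?_)
    have : x - t • (θ : E) + (t + u) • (θ : E) = x + u • (θ : E) := by
      rw [add_smul]; abel
    simp only [this, hFdef]
  rw [step1, ← intervalIntegral.integral_Iic_add_Ioi (b := (0:ℝ))
    hFi.integrableOn hFi.integrableOn]
  have step3 : (∫ u in Iic (0:ℝ), F u) = ∫ r in Ioi (0:ℝ), F (-r) := by
    rw [show Iic (0:ℝ) = Iic (-0) by rw [neg_zero], ← integral_comp_neg_Ioi]
  rw [step3, ← integral_add (hFi.comp_neg).integrableOn hFi.integrableOn]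
  refine setIntegral_congr_fun measurableSet_Ioi fun r hr ↦ ?_
  simp only [hFdef, neg_smul, ← sub_eq_add_neg]
  rw [add_comm]

end NormalOpAux

open NormalOpAux Set

/-- The normal operator `N = L*L` of the light ray transform, written as an integral over
the sphere, has the explicit Schwartz kernel
`(δ(t−t'−|x−x'|)+δ(t−t'+|x−x'|))/|x−x'|^{n−1}`. -/
theorem normal_operator_kernel {n : ℕ} (hn : 2 ≤ n)
    (f : ℝ × EuclideanSpace ℝ (Fin n) → ℂ)
    (hf : Continuous f) (hsupp : HasCompactSupport f)
    (t : ℝ) (x : EuclideanSpace ℝ (Fin n)) :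
    (∫ θ : sphere (0 : EuclideanSpace ℝ (Fin n)) 1,
        lightRay f (x - t • (θ : EuclideanSpace ℝ (Fin n))) θ ∂(sphereMeasure n))
      = ∫ y : EuclideanSpace ℝ (Fin n),
          (f (t + ‖y‖, x + y) + f (t - ‖y‖, x + y)) * (‖y‖ ^ ((1 : ℝ) - n) : ℝ) := by
  have hsm : sphereMeasure n = (volume : Measure (EuclideanSpace ℝ (Fin n))).toSphere := rfl
  have hq1 : Integrable (fun y : EuclideanSpace ℝ (Fin n) ↦
      (‖y‖ ^ ((1 : ℝ) - n) : ℝ) • f (t + ‖y‖, x + y)) volume :=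
    (aux_integrable hn f hf hsupp t x 1 1 (Or.inl rfl)).congr
      (Filter.Eventually.of_forall fun y ↦ by norm_num [one_smul])
  have hq2 : Integrable (fun y : EuclideanSpace ℝ (Fin n) ↦
      (‖y‖ ^ ((1 : ℝ) - n) : ℝ) • f (t - ‖y‖, x + y)) volume :=
    (aux_integrable hn f hf hsupp t x (-1) 1 (Or.inr rfl)).congr
      (Filter.Eventually.of_forall fun y ↦ by norm_num [one_smul, sub_eq_add_neg])
  have hq3 : Integrable (fun y : EuclideanSpace ℝ (Fin n) ↦
      (‖y‖ ^ ((1 : ℝ) - n) : ℝ) • f (t - ‖y‖, x - y)) volume :=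
    (aux_integrable hn f hf hsupp t x (-1) (-1) (Or.inr rfl)).congr
      (Filter.Eventually.of_forall fun y ↦ by norm_num [neg_one_smul, sub_eq_add_neg])
  have hg : Integrable (fun y : EuclideanSpace ℝ (Fin n) ↦
      (‖y‖ ^ ((1 : ℝ) - n) : ℝ) • (f (t + ‖y‖, x + y) + f (t - ‖y‖, x - y))) volume :=
    (hq1.add hq3).congr (Filter.Eventually.of_forall fun y ↦ (smul_add _ _ _).symm)
  have hprod := (integrable_polar_iff hn _).2 hg
  calc (∫ θ : sphere (0 : EuclideanSpace ℝ (Fin n)) 1,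
        lightRay f (x - t • (θ : EuclideanSpace ℝ (Fin n))) θ ∂(sphereMeasure n))
      = ∫ θ : sphere (0 : EuclideanSpace ℝ (Fin n)) 1,
          (∫ r in Ioi (0 : ℝ), (r ^ (n - 1) : ℝ) •
            ((‖r • (θ : EuclideanSpace ℝ (Fin n))‖ ^ ((1 : ℝ) - n) : ℝ) •
              (f (t + ‖r • (θ : EuclideanSpace ℝ (Fin n))‖, x + r • (θ : EuclideanSpace ℝ (Fin n)))
                + f (t - ‖r • (θ : EuclideanSpace ℝ (Fin n))‖,
                    x - r • (θ : EuclideanSpace ℝ (Fin n))))))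
          ∂((volume : Measure (EuclideanSpace ℝ (Fin n))).toSphere) := by
        rw [hsm]
        refine integral_congr_ae (Filter.Eventually.of_forall fun θ ↦ ?_)
        dsimp only
        rw [lightRay_eval f hf hsupp t x θ]
        refine setIntegral_congr_fun measurableSet_Ioi fun r hr ↦ ?_
        have hr0 : (0 : ℝ) < r := hr
        have hθ1 : ‖(θ : EuclideanSpace ℝ (Fin n))‖ = 1 := mem_sphere_zero_iff_norm.1 θ.2
        have hnorm : ‖r • (θ : EuclideanSpace ℝ (Fin n))‖ = r := by
          rw [norm_smul, hθ1, mul_one, Real.norm_eq_abs, abs_of_pos hr0]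
        have hcoef : (r ^ (n - 1) : ℝ) * r ^ ((1 : ℝ) - n) = 1 := by
          rw [← Real.rpow_natCast r (n - 1), ← Real.rpow_add hr0]
          rw [show ((n - 1 : ℕ) : ℝ) + ((1 : ℝ) - n) = 0 by
            push_cast [Nat.cast_sub (by omega : 1 ≤ n)]; ring]
          exact Real.rpow_zero r
        rw [hnorm, smul_smul, hcoef, one_smul]
    _ = ∫ y : EuclideanSpace ℝ (Fin n),
          (‖y‖ ^ ((1 : ℝ) - n) : ℝ) • (f (t + ‖y‖, x + y) + f (t - ‖y‖, x - y)) :=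
        (integral_polar hn
          (fun y : EuclideanSpace ℝ (Fin n) ↦
            (‖y‖ ^ ((1 : ℝ) - n) : ℝ) • (f (t + ‖y‖, x + y) + f (t - ‖y‖, x - y))) hprod).symm
    _ = (∫ y : EuclideanSpace ℝ (Fin n), (‖y‖ ^ ((1 : ℝ) - n) : ℝ) • f (t + ‖y‖, x + y))
        + ∫ y : EuclideanSpace ℝ (Fin n), (‖y‖ ^ ((1 : ℝ) - n) : ℝ) • f (t - ‖y‖, x - y) := by
        rw [← integral_add hq1 hq3]
        exact integral_congr_ae (Filter.Eventually.of_forall fun y ↦ smul_add _ _ _)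
    _ = (∫ y : EuclideanSpace ℝ (Fin n), (‖y‖ ^ ((1 : ℝ) - n) : ℝ) • f (t + ‖y‖, x + y))
        + ∫ y : EuclideanSpace ℝ (Fin n), (‖y‖ ^ ((1 : ℝ) - n) : ℝ) • f (t - ‖y‖, x + y) := by
        congr 1
        rw [show (fun y : EuclideanSpace ℝ (Fin n) ↦
            (‖y‖ ^ ((1 : ℝ) - n) : ℝ) • f (t - ‖y‖, x + y))
          = fun y : EuclideanSpace ℝ (Fin n) ↦
            (‖-y‖ ^ ((1 : ℝ) - n) : ℝ) • f (t - ‖-y‖, x - -y) from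
          funext fun y ↦ by rw [norm_neg, sub_neg_eq_add]]
        exact (integral_neg_eq_self
          (fun y : EuclideanSpace ℝ (Fin n) ↦ (‖y‖ ^ ((1 : ℝ) - n) : ℝ) • f (t - ‖y‖, x - y))
          volume).symm
    _ = ∫ y : EuclideanSpace ℝ (Fin n),
          ((‖y‖ ^ ((1 : ℝ) - n) : ℝ) • f (t + ‖y‖, x + y)
            + (‖y‖ ^ ((1 : ℝ) - n) : ℝ) • f (t - ‖y‖, x + y)) := (integral_add hq1 hq2).symm
    _ = ∫ y : EuclideanSpace ℝ (Fin n),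
          (f (t + ‖y‖, x + y) + f (t - ‖y‖, x + y)) * (‖y‖ ^ ((1 : ℝ) - n) : ℝ) := by
        refine integral_congr_ae (Filter.Eventually.of_forall fun y ↦ ?_)
        dsimp only
        rw [← smul_add, Complex.real_smul, mul_comm]
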